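/- A right R-module M is RD-flat if and only if its character module M^♭ = Hom_ℤ(M, ℚ/ℤ) is an RD-injective left R-module. -/

import Mathlib

universe u

open MulOpposite

section RDDefs

variable (R : Type u) [Ring R]

/-- `IsTensorZero R M N l` encodes the statement `∑ mᵢ ⊗ nᵢ = 0` in the tensor product
`M ⊗_R N` of the right `R`-module `M` with the left `R`-module `N`, via the universal
property of the tensor product: every `R`-balanced biadditive map kills the sum. -/
def IsTensorZero (M N : Type u) [AddCommGroup M] [Module Rᵐᵒᵖ M]
    [AddCommGroup N] [Module R N] (l : List (M × N)) : Prop :=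
  ∀ (A : Type u) [AddCommGroup A], ∀ b : M → N → A,
    (∀ m₁ m₂ n, b (m₁ + m₂) n = b m₁ n + b m₂ n) →
    (∀ m n₁ n₂, b m (n₁ + n₂) = b m n₁ + b m n₂) →
    (∀ (r : R) (m : M) (n : N), b (op r • m) n = b m (r • n)) →
    (l.map fun p => b p.1 p.2).sum = 0

/-- A right `R`-module `M` is RD-flat if tensoring with `M` preserves exactness of all
RD-exact sequences of left `R`-modules; equivalently, for every injective linear map
`f : H → F` of left `R`-modules whose image is a relatively divisible submodule
(`rF ∩ f(H) = r f(H)` for all `r`), the induced map `M ⊗ H → M ⊗ F` is injective. -/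
def RDFlat (M : Type u) [AddCommGroup M] [Module Rᵐᵒᵖ M] : Prop :=
  ∀ (H F : Type u) [AddCommGroup H] [Module R H] [AddCommGroup F] [Module R F],
    ∀ f : H →ₗ[R] F, Function.Injective f →
    (∀ (r : R) (h : H) (y : F), f h = r • y → ∃ h' : H, h = r • h') →
    ∀ l : List (M × H),
      IsTensorZero R M F (l.map fun p => (p.1, f p.2)) → IsTensorZero R M H l

/-- A right `R`-module `N` is RD-injective if every homomorphism into `N` from a
relatively divisible submodule of a right `R`-module extends to the whole module. -/
def RDInjective (N : Type u) [AddCommGroup N] [Module Rᵐᵒᵖ N] : Prop :=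
  ∀ (K L : Type u) [AddCommGroup K] [Module Rᵐᵒᵖ K] [AddCommGroup L] [Module Rᵐᵒᵖ L],
    ∀ f : K →ₗ[Rᵐᵒᵖ] L, Function.Injective f →
    (∀ (r : R) (k : K) (y : L), f k = op r • y → ∃ k' : K, k = op r • k') →
    ∀ g : K →ₗ[Rᵐᵒᵖ] N, ∃ h : L →ₗ[Rᵐᵒᵖ] N, h.comp f = g

/-- An injective linear map `f : K → L` of right `R`-modules is pure if every finite
system of linear equations `∑ⱼ xⱼ aᵢⱼ = kᵢ` with constants in `K` which is solvable
in `L` is solvable in `K`. -/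
def IsPure {K L : Type u} [AddCommGroup K] [Module Rᵐᵒᵖ K] [AddCommGroup L]
    [Module Rᵐᵒᵖ L] (f : K →ₗ[Rᵐᵒᵖ] L) : Prop :=
  ∀ (m n : ℕ) (a : Fin m → Fin n → R) (k : Fin m → K),
    (∃ x : Fin n → L, ∀ i, (∑ j, op (a i j) • x j) = f (k i)) →
    ∃ y : Fin n → K, ∀ i, (∑ j, op (a i j) • y j) = k i

/-- A right `R`-module `M` is RD-coflat if every RD-exact sequence `0 → M → P → Q → 0`
is pure-exact, i.e. whenever `M` embeds as a relatively divisible submodule of a right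
module `P`, it is a pure submodule of `P`. -/
def RDCoflat (M : Type u) [AddCommGroup M] [Module Rᵐᵒᵖ M] : Prop :=
  ∀ (P : Type u) [AddCommGroup P] [Module Rᵐᵒᵖ P],
    ∀ f : M →ₗ[Rᵐᵒᵖ] P, Function.Injective f →
    (∀ (r : R) (x : M) (y : P), f x = op r • y → ∃ x' : M, x = op r • x') →
    IsPure R f

/-- A right `R`-module `N` is pure-injective if every homomorphism into `N` from a pure
submodule of a right `R`-module extends to the whole module. -/
def PureInjective (N : Type u) [AddCommGroup N] [Module Rᵐᵒᵖ N] : Prop :=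
  ∀ (K L : Type u) [AddCommGroup K] [Module Rᵐᵒᵖ K] [AddCommGroup L] [Module Rᵐᵒᵖ L],
    ∀ f : K →ₗ[Rᵐᵒᵖ] L, Function.Injective f → IsPure R f →
    ∀ g : K →ₗ[Rᵐᵒᵖ] N, ∃ h : L →ₗ[Rᵐᵒᵖ] N, h.comp f = g

/-- A right `R`-module `F` is pure-projective if every homomorphism from `F` to a
quotient in a pure-exact sequence lifts. -/
def PureProjective (F : Type u) [AddCommGroup F] [Module Rᵐᵒᵖ F] : Prop :=
  ∀ (L Q : Type u) [AddCommGroup L] [Module Rᵐᵒᵖ L] [AddCommGroup Q] [Module Rᵐᵒᵖ Q],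
    ∀ p : L →ₗ[Rᵐᵒᵖ] Q, Function.Surjective p → IsPure R (LinearMap.ker p).subtype →
    ∀ g : F →ₗ[Rᵐᵒᵖ] Q, ∃ h : F →ₗ[Rᵐᵒᵖ] L, p.comp h = g

/-- A right `R`-module `F` is RD-projective if every homomorphism from `F` to a
quotient in an RD-exact sequence (the kernel is a relatively divisible submodule)
lifts. -/
def RDProjective (F : Type u) [AddCommGroup F] [Module Rᵐᵒᵖ F] : Prop :=
  ∀ (L Q : Type u) [AddCommGroup L] [Module Rᵐᵒᵖ L] [AddCommGroup Q] [Module Rᵐᵒᵖ Q],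
    ∀ p : L →ₗ[Rᵐᵒᵖ] Q, Function.Surjective p →
    (∀ (r : R) (x : L), p x = 0 → (∃ y : L, x = op r • y) →
      ∃ z : L, p z = 0 ∧ x = op r • z) →
    ∀ g : F →ₗ[Rᵐᵒᵖ] Q, ∃ h : F →ₗ[Rᵐᵒᵖ] L, p.comp h = g

end RDDefs

section RDDefsLeft

variable (R : Type u) [Ring R]

/-- A left `R`-module `N` is RD-injective if every homomorphism into `N` from a
relatively divisible submodule of a left `R`-module extends to the whole module. -/
def RDInjectiveL (N : Type u) [AddCommGroup N] [Module R N] : Prop :=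
  ∀ (K L : Type u) [AddCommGroup K] [Module R K] [AddCommGroup L] [Module R L],
    ∀ f : K →ₗ[R] L, Function.Injective f →
    (∀ (r : R) (k : K) (y : L), f k = r • y → ∃ k' : K, k = r • k') →
    ∀ g : K →ₗ[R] N, ∃ h : L →ₗ[R] N, h.comp f = g

/-- An injective linear map `f : K → L` of left `R`-modules is pure if every finite
system of linear equations `∑ⱼ aᵢⱼ xⱼ = kᵢ` with constants in `K` which is solvable
in `L` is solvable in `K`. -/
def IsPureL {K L : Type u} [AddCommGroup K] [Module R K] [AddCommGroup L]
    [Module R L] (f : K →ₗ[R] L) : Prop :=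
  ∀ (m n : ℕ) (a : Fin m → Fin n → R) (k : Fin m → K),
    (∃ x : Fin n → L, ∀ i, (∑ j, a i j • x j) = f (k i)) →
    ∃ y : Fin n → K, ∀ i, (∑ j, a i j • y j) = k i

/-- A left `R`-module `M` is RD-coflat if every RD-exact sequence `0 → M → P → Q → 0`
is pure-exact, i.e. whenever `M` embeds as a relatively divisible submodule of a left
module `P`, it is a pure submodule of `P`. -/
def RDCoflatL (M : Type u) [AddCommGroup M] [Module R M] : Prop :=
  ∀ (P : Type u) [AddCommGroup P] [Module R P],
    ∀ f : M →ₗ[R] P, Function.Injective f →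
    (∀ (r : R) (x : M) (y : P), f x = r • y → ∃ x' : M, x = r • x') →
    IsPureL R f

/-- A left `R`-module `N` is pure-injective if every homomorphism into `N` from a pure
submodule of a left `R`-module extends to the whole module. -/
def PureInjectiveL (N : Type u) [AddCommGroup N] [Module R N] : Prop :=
  ∀ (K L : Type u) [AddCommGroup K] [Module R K] [AddCommGroup L] [Module R L],
    ∀ f : K →ₗ[R] L, Function.Injective f → IsPureL R f →
    ∀ g : K →ₗ[R] N, ∃ h : L →ₗ[R] N, h.comp f = g

end RDDefsLeft

section Character

variable (R : Type u) [Ring R] (M : Type u) [AddCommGroup M] [Module Rᵐᵒᵖ M]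

/-- The left `R`-action on the character module `M⋆ = Hom_ℤ(M, ℚ/ℤ)` of a right
`R`-module `M`, given by `(r • f) m = f (m r)`. -/
instance charSMul : SMul R (M →+ AddCircle (1 : ℚ)) :=
  ⟨fun r f => f.comp (AddMonoidHom.mk' (fun m => op r • m) fun a b => smul_add (op r) a b)⟩

@[simp] lemma char_smul_apply (r : R) (f : M →+ AddCircle (1 : ℚ)) (m : M) :
    (r • f) m = f (op r • m) := rfl

/-- The character module of a right `R`-module is a left `R`-module. -/
instance charModule : Module R (M →+ AddCircle (1 : ℚ)) where
  one_smul f := by ext m; simp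
  mul_smul r s f := by ext m; simp [op_mul, mul_smul]
  smul_zero r := by ext m; simp
  smul_add r f g := by ext m; simp
  add_smul r s f := by ext m; simp [op_add, add_smul]
  zero_smul f := by ext m; simp

end Character


section TConstr

variable {R : Type u} [Ring R] {M N : Type u} [AddCommGroup M] [Module Rᵐᵒᵖ M]
  [AddCommGroup N] [Module R N]

variable (R M N) in
/-- Relations making the ℤ-tensor product into the tensor product over `R`. -/
def relSub : Submodule ℤ (TensorProduct ℤ M N) :=
  Submodule.span ℤ {x | ∃ (r : R) (m : M) (n : N), x = (op r • m) ⊗ₜ[ℤ] n - m ⊗ₜ[ℤ] (r • n)}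

variable (R M N) in
/-- The tensor product of a right `R`-module and a left `R`-module, as an abelian group. -/
def TT : Type u := TensorProduct ℤ M N ⧸ relSub R M N

noncomputable instance : AddCommGroup (TT R M N) :=
  inferInstanceAs (AddCommGroup (TensorProduct ℤ M N ⧸ relSub R M N))

noncomputable instance : Module ℤ (TT R M N) :=
  inferInstanceAs (Module ℤ (TensorProduct ℤ M N ⧸ relSub R M N))

/-- Pure tensors in `TT R M N`. -/
noncomputable def tmk (m : M) (n : N) : TT R M N :=
  Submodule.Quotient.mk (p := relSub R M N) (m ⊗ₜ[ℤ] n)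

lemma tmk_add_left (m₁ m₂ : M) (n : N) : tmk (R := R) (m₁ + m₂) n = tmk m₁ n + tmk m₂ n := by
  rw [tmk, tmk, tmk, TensorProduct.add_tmul]
  rfl

lemma tmk_add_right (m : M) (n₁ n₂ : N) : tmk (R := R) m (n₁ + n₂) = tmk m n₁ + tmk m n₂ := by
  rw [tmk, tmk, tmk, TensorProduct.tmul_add]
  rfl

lemma tmk_bal (r : R) (m : M) (n : N) :
    tmk (R := R) (op r • m) n = tmk (R := R) m (r • n) := by
  rw [tmk, tmk]
  refine (Submodule.Quotient.eq (p := relSub R M N)).mpr ?_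
  exact Submodule.subset_span ⟨r, m, n, rfl⟩

/-- Lift a balanced biadditive map to `TT R M N`. -/
noncomputable def liftBal {A : Type*} [AddCommGroup A] (b : M →+ N →+ A)
    (hb : ∀ (r : R) (m : M) (n : N), b (op r • m) n = b m (r • n)) :
    TT R M N →ₗ[ℤ] A :=
  Submodule.liftQ _ (TensorProduct.liftAddHom b (fun z m n => by
      show b.flip n (z • m) = b m (z • n)
      rw [map_zsmul (b.flip n) z m, map_zsmul (b m) z n]
      rfl)).toIntLinearMap
    (by
      rw [relSub, Submodule.span_le]
      rintro x ⟨r, m, n, rfl⟩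
      simp only [SetLike.mem_coe, LinearMap.mem_ker, AddMonoidHom.coe_toIntLinearMap,
        map_sub, TensorProduct.liftAddHom_tmul, hb, sub_self])

@[simp] lemma liftBal_tmk {A : Type*} [AddCommGroup A] (b : M →+ N →+ A)
    (hb : ∀ (r : R) (m : M) (n : N), b (op r • m) n = b m (r • n)) (m : M) (n : N) :
    liftBal b hb (tmk m n) = b m n := rfl

/-- The class of `∑ mᵢ ⊗ nᵢ` in `TT R M N`. -/
noncomputable def tsumL (l : List (M × N)) : TT R M N := (l.map fun p => tmk p.1 p.2).sum

lemma liftBal_tsumL {A : Type*} [AddCommGroup A] (b : M →+ N →+ A)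
    (hb : ∀ (r : R) (m : M) (n : N), b (op r • m) n = b m (r • n)) (l : List (M × N)) :
    liftBal b hb (tsumL l) = (l.map fun p => b p.1 p.2).sum := by
  rw [tsumL, map_list_sum, List.map_map]
  exact congrArg List.sum (List.map_congr_left fun p _ => liftBal_tmk b hb p.1 p.2)

lemma exists_tsumL (t : TT R M N) : ∃ l : List (M × N), tsumL l = t := by
  obtain ⟨x, rfl⟩ := Submodule.Quotient.mk_surjective (relSub R M N) t
  induction x using TensorProduct.induction_on with
  | zero =>
      refine ⟨[], ?_⟩
      show (0 : TT R M N) = _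
      rw [Submodule.Quotient.mk_zero]
      rfl
  | tmul m n =>
      refine ⟨[(m, n)], ?_⟩
      rw [tsumL]
      simp only [List.map_cons, List.map_nil, List.sum_cons, List.sum_nil, add_zero]
      rfl
  | add x y hx hy =>
      obtain ⟨lx, hlx⟩ := hx
      obtain ⟨ly, hly⟩ := hy
      refine ⟨lx ++ ly, ?_⟩
      rw [tsumL, List.map_append, List.sum_append, ← tsumL, ← tsumL, hlx, hly]
      rfl

lemma isTensorZero_iff (l : List (M × N)) :
    IsTensorZero R M N l ↔ tsumL (R := R) l = 0 := by
  constructor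
  · intro h
    exact h (TT R M N) (fun m n => tmk m n) tmk_add_left tmk_add_right tmk_bal
  · intro h A _ b hb1 hb2 hb3
    let B : M →+ N →+ A :=
      AddMonoidHom.mk' (fun m => AddMonoidHom.mk' (b m) (hb2 m))
        (fun m₁ m₂ => by ext n; exact hb1 m₁ m₂ n)
    have hB : ∀ (r : R) (m : M) (n : N), B (op r • m) n = B m (r • n) := hb3
    have := congrArg (liftBal B hB) h
    rw [liftBal_tsumL, map_zero] at this
    exact this

variable {H F : Type u} [AddCommGroup H] [Module R H] [AddCommGroup F] [Module R F]

/-- The map `TT R M H → TT R M F` induced by `f : H →ₗ[R] F`. -/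
noncomputable def tmap (f : H →ₗ[R] F) : TT R M H →ₗ[ℤ] TT R M F :=
  liftBal
    (AddMonoidHom.mk' (fun m => AddMonoidHom.mk' (fun h => tmk m (f h))
        (fun h₁ h₂ => by
          show tmk (R := R) m (f (h₁ + h₂)) = tmk m (f h₁) + tmk m (f h₂)
          rw [map_add, tmk_add_right]))
      (fun m₁ m₂ => by ext h; exact tmk_add_left m₁ m₂ (f h)))
    (fun r m h => by
      show tmk (op r • m) (f h) = tmk m (f (r • h))
      rw [map_smul, tmk_bal])

@[simp] lemma tmap_tmk (f : H →ₗ[R] F) (m : M) (h : H) :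
    tmap f (tmk m h) = tmk m (f h) :=
  liftBal_tmk _ _ m h

lemma tmap_tsumL (f : H →ₗ[R] F) (l : List (M × H)) :
    tmap f (tsumL l) = tsumL (l.map fun p => (p.1, f p.2)) := by
  rw [tmap, liftBal_tsumL, tsumL, List.map_map]
  rfl

/-- The character of `TT R M N` associated to an `R`-linear map `N → M^♭`. -/
noncomputable def charOf (g : N →ₗ[R] (M →+ AddCircle (1 : ℚ))) :
    TT R M N →ₗ[ℤ] AddCircle (1 : ℚ) :=
  liftBal
    (AddMonoidHom.mk' (fun m => AddMonoidHom.mk' (fun n => g n m)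
        (fun n₁ n₂ => by
          show g (n₁ + n₂) m = g n₁ m + g n₂ m
          rw [map_add]
          rfl))
      (fun m₁ m₂ => by ext n; exact (g n).map_add m₁ m₂))
    (fun r m n => by
      show g n (op r • m) = g (r • n) m
      rw [g.map_smul r n]
      rfl)

@[simp] lemma charOf_tmk (g : N →ₗ[R] (M →+ AddCircle (1 : ℚ))) (m : M) (n : N) :
    charOf g (tmk m n) = g n m :=
  liftBal_tmk _ _ m n

lemma charOf_tsumL (g : N →ₗ[R] (M →+ AddCircle (1 : ℚ))) (l : List (M × N)) :
    charOf g (tsumL l) = (l.map fun p => g p.2 p.1).sum := by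
  rw [charOf, liftBal_tsumL]
  rfl

lemma char_tsumL (χ : TT R M N →+ AddCircle (1 : ℚ)) (l : List (M × N)) :
    χ (tsumL l) = (l.map fun p => χ (tmk p.1 p.2)).sum := by
  rw [tsumL, map_list_sum, List.map_map]
  rfl

/-- The `R`-linear map `N → M^♭` associated to a character of `TT R M N`. -/
noncomputable def homOf (χ : TT R M N →+ AddCircle (1 : ℚ)) : N →ₗ[R] (M →+ AddCircle (1 : ℚ)) where
  toFun n := AddMonoidHom.mk' (fun m => χ (tmk m n))
    (fun m₁ m₂ => by
      show χ (tmk (m₁ + m₂) n) = χ (tmk m₁ n) + χ (tmk m₂ n)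
      rw [tmk_add_left, map_add])
  map_add' n₁ n₂ := by
    ext m
    show χ (tmk m (n₁ + n₂)) = χ (tmk m n₁) + χ (tmk m n₂)
    rw [tmk_add_right, map_add]
  map_smul' r n := by
    ext m
    show χ (tmk m (r • n)) = χ (tmk (op r • m) n)
    rw [tmk_bal]

@[simp] lemma homOf_apply (χ : TT R M N →+ AddCircle (1 : ℚ)) (n : N) (m : M) :
    homOf χ n m = χ (tmk m n) := rfl

end TConstr

/-- A right `R`-module `M` is RD-flat if and only if its character module
`M^♭ = Hom_ℤ(M, ℚ/ℤ)` is an RD-injective left `R`-module. -/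
theorem rdFlat_iff_character_rdInjective (R : Type u) [Ring R]
    (M : Type u) [AddCommGroup M] [Module Rᵐᵒᵖ M] :
    RDFlat R M ↔ RDInjectiveL R (M →+ AddCircle (1 : ℚ)) := by
  constructor
  · intro hM K L _ _ _ _ f hf hrd g
    have hinj : Function.Injective (tmap (M := M) f) := by
      rw [injective_iff_map_eq_zero]
      intro t ht
      obtain ⟨l, rfl⟩ := exists_tsumL t
      rw [tmap_tsumL] at ht
      exact (isTensorZero_iff l).mp (hM K L f hf hrd l ((isTensorZero_iff _).mpr ht))
    obtain ⟨χ', hχ'⟩ := CharacterModule.dual_surjective_of_injective (R := ℤ)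
      (tmap (M := M) f) hinj ((charOf g).toAddMonoidHom : CharacterModule (TT R M K))
    refine ⟨homOf χ', LinearMap.ext fun k => AddMonoidHom.ext fun m => ?_⟩
    have h1 := DFunLike.congr_fun hχ' (tmk m k)
    simp only [CharacterModule.dual_apply, AddMonoidHom.coe_comp, Function.comp_apply] at h1
    show χ' (tmk m (f k)) = g k m
    rw [← tmap_tmk]
    calc χ' (tmap f (tmk m k)) = charOf g (tmk m k) := h1
    _ = g k m := charOf_tmk g m k
  · intro hN H F _ _ _ _ f hf hrd l hl
    rw [isTensorZero_iff] at hl ⊢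
    by_contra ht
    obtain ⟨χ, hχ⟩ := CharacterModule.exists_character_apply_ne_zero_of_ne_zero ht
    obtain ⟨h, hh⟩ := hN H F f hf hrd (homOf χ)
    apply hχ
    have h2 : charOf h (tsumL (l.map fun p => (p.1, f p.2))) = 0 := by
      rw [hl, map_zero]
    rw [charOf_tsumL, List.map_map] at h2
    show χ (tsumL l) = 0
    rw [show χ (tsumL l) = _ from char_tsumL χ l]
    have hpt : ∀ p : M × H, χ (tmk p.1 p.2) = h (f p.2) p.1 := by
      intro p
      have := DFunLike.congr_fun (DFunLike.congr_fun hh p.2) p.1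
      exact this.symm
    calc (l.map fun p => χ (tmk p.1 p.2)).sum
        = (l.map ((fun q : M × F => h q.2 q.1) ∘ fun p : M × H => (p.1, f p.2))).sum := by
          congr 1
          exact List.map_congr_left fun p _ => hpt p
    _ = 0 := h2
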